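/- (Instance of Proposition 5.2(ii): essential uniqueness of globally optimal policies transfers from the static reduction to the dynamic team.) Suppose the static policy (γ₁*, δ₂*) is globally optimal for J^S and is essentially unique: every globally optimal static policy (γ₁, δ₂) satisfies γ₁(y₁(ω)) = γ₁*(y₁(ω)) for P-a.e. ω and δ₂(y₁(ω), ŷ₂(ω)) = δ₂*(y₁(ω), ŷ₂(ω)) for P-a.e. ω. Then the dynamic policy (γ₁*, γ₂*), where γ₂*(y, t) := δ₂*(y, g⁻(t, γ₁*(y))), is globally optimal for J^D, and it is essentially unique in the sense that every globally optimal dynamic policy (γ₁, γ₂) satisfies γ₁(y₁(ω)) = γ₁*(y₁(ω)) for P-a.e. ω and γ₂(y₁(ω), g(ŷ₂(ω), γ₁*(y₁(ω)))) = γ₂*(y₁(ω), g(ŷ₂(ω), γ₁*(y₁(ω)))) for P-a.e. ω. -/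
import Mathlib


open MeasureTheory
open scoped ENNReal

/-- **Instance of Proposition 5.2(ii): essential uniqueness of globally optimal policies
transfers from the static reduction to the dynamic team.** If `(γ₁s, δ₂s)` is globally
optimal for `JS` and essentially unique, then the dynamic policy
`(γ₁s, (y, t) ↦ δ₂s (y, ginv (t, γ₁s y)))` is globally optimal for `JD` and is
essentially unique among globally optimal dynamic policies. -/
theorem essential_uniqueness_transfers_static_to_dynamic
    {Ω Ω₀ Y₁ Yh Yh' U₁ U₂ : Type*}
    [MeasurableSpace Ω] [MeasurableSpace Ω₀] [MeasurableSpace Y₁]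
    [MeasurableSpace Yh] [MeasurableSpace Yh'] [MeasurableSpace U₁] [MeasurableSpace U₂]
    (P : Measure Ω) [IsProbabilityMeasure P]
    (ω₀ : Ω → Ω₀) (y₁ : Ω → Y₁) (yhat₂ : Ω → Yh)
    (hω₀ : Measurable ω₀) (hy₁ : Measurable y₁) (hyhat₂ : Measurable yhat₂)
    (g : Yh × U₁ → Yh') (ginv : Yh' × U₁ → Yh)
    (hg : Measurable g) (hginv : Measurable ginv)
    (hgl : ∀ (s : Yh) (u : U₁), ginv (g (s, u), u) = s)
    (hgr : ∀ (t : Yh') (u : U₁), g (ginv (t, u), u) = t)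
    (c : Ω₀ × U₁ × U₂ → ℝ≥0∞) (hc : Measurable c)
    (JD : (Y₁ → U₁) → (Y₁ × Yh' → U₂) → ℝ≥0∞)
    (JS : (Y₁ → U₁) → (Y₁ × Yh → U₂) → ℝ≥0∞)
    (hJD : ∀ γ₁ γ₂, JD γ₁ γ₂
      = ∫⁻ ω, c (ω₀ ω, γ₁ (y₁ ω), γ₂ (y₁ ω, g (yhat₂ ω, γ₁ (y₁ ω)))) ∂P)
    (hJS : ∀ γ₁ δ₂, JS γ₁ δ₂
      = ∫⁻ ω, c (ω₀ ω, γ₁ (y₁ ω), δ₂ (y₁ ω, yhat₂ ω)) ∂P)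
    (γ₁s : Y₁ → U₁) (δ₂s : Y₁ × Yh → U₂)
    (hγ₁s : Measurable γ₁s) (hδ₂s : Measurable δ₂s)
    -- global optimality of (γ₁s, δ₂s) for the static reduction
    (hopt : ∀ (γ₁ : Y₁ → U₁) (δ₂ : Y₁ × Yh → U₂), Measurable γ₁ → Measurable δ₂ →
      JS γ₁s δ₂s ≤ JS γ₁ δ₂)
    -- essential uniqueness of (γ₁s, δ₂s) among globally optimal static policies
    (huniq : ∀ (γ₁ : Y₁ → U₁) (δ₂ : Y₁ × Yh → U₂), Measurable γ₁ → Measurable δ₂ →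
      (∀ (γ₁' : Y₁ → U₁) (δ₂' : Y₁ × Yh → U₂), Measurable γ₁' → Measurable δ₂' →
        JS γ₁ δ₂ ≤ JS γ₁' δ₂') →
      (∀ᵐ ω ∂P, γ₁ (y₁ ω) = γ₁s (y₁ ω))
        ∧ (∀ᵐ ω ∂P, δ₂ (y₁ ω, yhat₂ ω) = δ₂s (y₁ ω, yhat₂ ω))) :
    -- the corresponding dynamic policy is globally optimal for JD ...
    (∀ (γ₁ : Y₁ → U₁) (γ₂ : Y₁ × Yh' → U₂), Measurable γ₁ → Measurable γ₂ →
      JD γ₁s (fun p => δ₂s (p.1, ginv (p.2, γ₁s p.1))) ≤ JD γ₁ γ₂)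
    -- ... and is essentially unique among globally optimal dynamic policies
    ∧ (∀ (γ₁ : Y₁ → U₁) (γ₂ : Y₁ × Yh' → U₂), Measurable γ₁ → Measurable γ₂ →
        (∀ (γ₁' : Y₁ → U₁) (γ₂' : Y₁ × Yh' → U₂), Measurable γ₁' → Measurable γ₂' →
          JD γ₁ γ₂ ≤ JD γ₁' γ₂') →
        (∀ᵐ ω ∂P, γ₁ (y₁ ω) = γ₁s (y₁ ω))
          ∧ (∀ᵐ ω ∂P, γ₂ (y₁ ω, g (yhat₂ ω, γ₁s (y₁ ω)))
              = (fun p => δ₂s (p.1, ginv (p.2, γ₁s p.1)))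
                  (y₁ ω, g (yhat₂ ω, γ₁s (y₁ ω))))) := by

  -- Key equalities:
  -- JD γ₁ γ₂ = JS γ₁ (fun p => γ₂ (p.1, g (p.2, γ₁ p.1)))
  have key : ∀ (γ₁ : Y₁ → U₁) (γ₂ : Y₁ × Yh' → U₂),
      JD γ₁ γ₂ = JS γ₁ (fun p => γ₂ (p.1, g (p.2, γ₁ p.1))) := by
    intro γ₁ γ₂
    rw [hJD, hJS]
  -- measurability of the static policy induced by a dynamic one
  have meas_st : ∀ (γ₁ : Y₁ → U₁) (γ₂ : Y₁ × Yh' → U₂), Measurable γ₁ → Measurable γ₂ →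
      Measurable (fun p : Y₁ × Yh => γ₂ (p.1, g (p.2, γ₁ p.1))) := by
    intro γ₁ γ₂ h1 h2
    exact h2.comp (measurable_fst.prodMk
      (hg.comp (measurable_snd.prodMk (h1.comp measurable_fst))))
  -- measurability of the dynamic policy induced by a static one
  have meas_dy : ∀ (γ₁ : Y₁ → U₁) (δ₂ : Y₁ × Yh → U₂), Measurable γ₁ → Measurable δ₂ →
      Measurable (fun p : Y₁ × Yh' => δ₂ (p.1, ginv (p.2, γ₁ p.1))) := by
    intro γ₁ δ₂ h1 h2
    exact h2.comp (measurable_fst.prodMk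
      (hginv.comp (measurable_snd.prodMk (h1.comp measurable_fst))))
  -- JD of the induced dynamic policy equals JS of the static one
  have key2 : ∀ (γ₁ : Y₁ → U₁) (δ₂ : Y₁ × Yh → U₂),
      JD γ₁ (fun p => δ₂ (p.1, ginv (p.2, γ₁ p.1))) = JS γ₁ δ₂ := by
    intro γ₁ δ₂
    rw [hJD, hJS]
    simp only [hgl]
  have opt : ∀ (γ₁ : Y₁ → U₁) (γ₂ : Y₁ × Yh' → U₂), Measurable γ₁ → Measurable γ₂ →
      JD γ₁s (fun p => δ₂s (p.1, ginv (p.2, γ₁s p.1))) ≤ JD γ₁ γ₂ := by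
    intro γ₁ γ₂ h1 h2
    rw [key2, key γ₁ γ₂]
    exact hopt _ _ h1 (meas_st _ _ h1 h2)
  refine ⟨opt, ?_⟩
  intro γ₁ γ₂ h1 h2 hDopt
  -- the induced static policy is globally optimal for JS
  have hSopt : ∀ (γ₁' : Y₁ → U₁) (δ₂' : Y₁ × Yh → U₂), Measurable γ₁' → Measurable δ₂' →
      JS γ₁ (fun p => γ₂ (p.1, g (p.2, γ₁ p.1))) ≤ JS γ₁' δ₂' := by
    intro γ₁' δ₂' h1' h2'
    rw [← key γ₁ γ₂, ← key2 γ₁' δ₂']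
    exact hDopt _ _ h1' (meas_dy _ _ h1' h2')
  obtain ⟨ha, hb⟩ := huniq γ₁ _ h1 (meas_st _ _ h1 h2) hSopt
  refine ⟨ha, ?_⟩
  filter_upwards [ha, hb] with ω ha' hb'
  simp only [← ha', hgl]
  exact hb'
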